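/- Let r₁, r₂, b₁, b₂, δ₁, δ₂, δ₃, δ₄ be positive reals with δ₁δ₂ < δ₃δ₄, and assume that either r₁ < (δ₁δ₂/(b₂(δ₃δ₄−δ₁δ₂)))^{1/δ₄} or r₂ < (δ₁δ₂/(b₁(δ₃δ₄−δ₁δ₂)))^{1/δ₃}. Then for every initial condition (x₀,y₀) ∈ [0,∞)² the orbit (x_{t+1},y_{t+1}) = T(x_t,y_t) of the competition map T converges, as t → ∞, to some fixed point of T. -/

import Mathlib

open Filter Topology

/-- The one-component generalized Beverton–Holt response. -/
noncomputable def bhAux (r δ b δ' u v : ℝ) : ℝ :=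
  r * u ^ δ / (1 + u ^ δ + b * v ^ δ')

lemma bhAux_denom_pos {b : ℝ} (δ δ' : ℝ) (hb : 0 < b) {u v : ℝ} (hu : 0 ≤ u) (hv : 0 ≤ v) :
    0 < 1 + u ^ δ + b * v ^ δ' := by
  have h1 : 0 ≤ u ^ δ := Real.rpow_nonneg hu δ
  have h2 : 0 ≤ b * v ^ δ' := mul_nonneg hb.le (Real.rpow_nonneg hv δ')
  linarith

lemma bhAux_nonneg {r b : ℝ} (δ δ' : ℝ) (hr : 0 < r) (hb : 0 < b) {u v : ℝ}
    (hu : 0 ≤ u) (hv : 0 ≤ v) : 0 ≤ bhAux r δ b δ' u v :=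
  div_nonneg (mul_nonneg hr.le (Real.rpow_nonneg hu δ)) (bhAux_denom_pos δ δ' hb hu hv).le

lemma bhAux_le {r b : ℝ} (δ δ' : ℝ) (hr : 0 < r) (hb : 0 < b) {u v : ℝ}
    (hu : 0 ≤ u) (hv : 0 ≤ v) : bhAux r δ b δ' u v ≤ r := by
  rw [bhAux, div_le_iff₀ (bhAux_denom_pos δ δ' hb hu hv)]
  have h1 : 0 ≤ u ^ δ := Real.rpow_nonneg hu δ
  have h2 : 0 ≤ b * v ^ δ' := mul_nonneg hb.le (Real.rpow_nonneg hv δ')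
  nlinarith

lemma bhAux_mono {r b δ δ' : ℝ} (hr : 0 < r) (hb : 0 < b) (hδ : 0 < δ) (hδ' : 0 < δ')
    {u u' v v' : ℝ} (hu : 0 ≤ u) (huu : u ≤ u') (hv' : 0 ≤ v') (hvv : v' ≤ v) :
    bhAux r δ b δ' u v ≤ bhAux r δ b δ' u' v' := by
  have hU : u ^ δ ≤ u' ^ δ := Real.rpow_le_rpow hu huu hδ.le
  have hB : b * v' ^ δ' ≤ b * v ^ δ' :=
    mul_le_mul_of_nonneg_left (Real.rpow_le_rpow hv' hvv hδ'.le) hb.le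
  have hU0 : 0 ≤ u ^ δ := Real.rpow_nonneg hu δ
  have hB0 : 0 ≤ b * v' ^ δ' := mul_nonneg hb.le (Real.rpow_nonneg hv' δ')
  rw [bhAux, bhAux, div_le_div_iff₀ (bhAux_denom_pos δ δ' hb hu (le_trans hv' hvv))
    (bhAux_denom_pos δ δ' hb (le_trans hu huu) hv')]
  have key : u ^ δ * (b * v' ^ δ') ≤ u' ^ δ * (b * v ^ δ') :=
    mul_le_mul hU hB hB0 (le_trans hU0 hU)
  nlinarith [mul_le_mul_of_nonneg_left hU hr.le, mul_le_mul_of_nonneg_left key hr.le]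

lemma bhAux_lt_left {r b δ δ' : ℝ} (hr : 0 < r) (hb : 0 < b) (hδ : 0 < δ)
    {u u' v : ℝ} (hu : 0 ≤ u) (huu : u < u') (hv : 0 ≤ v) :
    bhAux r δ b δ' u v < bhAux r δ b δ' u' v := by
  have hU : u ^ δ < u' ^ δ := Real.rpow_lt_rpow hu huu hδ
  have hU0 : 0 ≤ u ^ δ := Real.rpow_nonneg hu δ
  have hB0 : 0 ≤ b * v ^ δ' := mul_nonneg hb.le (Real.rpow_nonneg hv δ')
  rw [bhAux, bhAux, div_lt_div_iff₀ (bhAux_denom_pos δ δ' hb hu hv)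
    (bhAux_denom_pos δ δ' hb (hu.trans huu.le) hv)]
  have key : u ^ δ * (b * v ^ δ') ≤ u' ^ δ * (b * v ^ δ') :=
    mul_le_mul_of_nonneg_right hU.le hB0
  nlinarith [mul_lt_mul_of_pos_left hU hr, mul_le_mul_of_nonneg_left key hr.le]
/-- AM-GM consequence: `1 ≤ (1-k) R^k + k R^(k-1)` for `R ≥ 1`, `0 < k < 1`. -/
lemma bhAux_amgm {k R : ℝ} (hk0 : 0 < k) (hk1 : k < 1) (hR : 1 < R) :
    1 ≤ (1 - k) * R ^ k + k * R ^ (k - 1) := by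
  have hR0 : (0:ℝ) < R := by linarith
  have hprod : (R ^ k) ^ (1 - k) * (R ^ (k - 1)) ^ k = 1 := by
    rw [← Real.rpow_mul hR0.le, ← Real.rpow_mul hR0.le, ← Real.rpow_add hR0]
    have : k * (1 - k) + (k - 1) * k = 0 := by ring
    rw [this, Real.rpow_zero]
  have h := Real.geom_mean_le_arith_mean2_weighted (by linarith : (0:ℝ) ≤ 1 - k) hk0.le
    (Real.rpow_nonneg hR0.le k) (Real.rpow_nonneg hR0.le (k - 1)) (by ring)
  rw [hprod] at h
  exact h

set_option maxHeartbeats 1600000 in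
/-- Key univalence: on the strip `p₁ ≤ r₁` the map is "inverse cooperative". -/
lemma bhAux_univalence {r₁ r₂ b₁ b₂ δ₁ δ₂ δ₃ δ₄ : ℝ}
    (hr₁ : 0 < r₁) (hr₂ : 0 < r₂) (hb₁ : 0 < b₁) (hb₂ : 0 < b₂)
    (hδ₁ : 0 < δ₁) (hδ₂ : 0 < δ₂) (hδ₃ : 0 < δ₃) (hδ₄ : 0 < δ₄)
    (hδ : δ₁ * δ₂ < δ₃ * δ₄)
    (ht : b₂ * r₁ ^ δ₄ * (δ₃ * δ₄ - δ₁ * δ₂) < δ₁ * δ₂)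
    {p₁ p₂ q₁ q₂ : ℝ} (hp₁ : 0 ≤ p₁) (hp₂ : 0 ≤ p₂) (hq₁ : 0 ≤ q₁) (hq₂ : 0 ≤ q₂)
    (hp₁r : p₁ ≤ r₁)
    (hF : bhAux r₁ δ₁ b₁ δ₃ p₁ p₂ ≤ bhAux r₁ δ₁ b₁ δ₃ q₁ q₂)
    (hG : bhAux r₂ δ₂ b₂ δ₄ p₂ p₁ ≤ bhAux r₂ δ₂ b₂ δ₄ q₂ q₁) :
    p₁ ≤ q₁ ∧ p₂ ≤ q₂ := by
  rcases le_or_gt p₁ q₁ with h1 | h1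
  · refine ⟨h1, ?_⟩
    by_contra h2
    push_neg at h2
    have c1 : bhAux r₂ δ₂ b₂ δ₄ p₂ q₁ ≤ bhAux r₂ δ₂ b₂ δ₄ p₂ p₁ :=
      bhAux_mono hr₂ hb₂ hδ₂ hδ₄ hp₂ le_rfl hp₁ h1
    have c2 : bhAux r₂ δ₂ b₂ δ₄ q₂ q₁ < bhAux r₂ δ₂ b₂ δ₄ p₂ q₁ :=
      bhAux_lt_left hr₂ hb₂ hδ₂ hq₂ h2 hq₁
    linarith
  · rcases le_or_gt p₂ q₂ with h2 | h2
    · exfalso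
      have c1 : bhAux r₁ δ₁ b₁ δ₃ p₁ q₂ ≤ bhAux r₁ δ₁ b₁ δ₃ p₁ p₂ :=
        bhAux_mono hr₁ hb₁ hδ₁ hδ₃ hp₁ le_rfl hp₂ h2
      have c2 : bhAux r₁ δ₁ b₁ δ₃ q₁ q₂ < bhAux r₁ δ₁ b₁ δ₃ p₁ q₂ :=
        bhAux_lt_left hr₁ hb₁ hδ₁ hq₁ h1 hq₂
      linarith
    · exfalso
      -- main case: q₁ < p₁, q₂ < p₂
      rcases eq_or_lt_of_le hq₁ with hq₁0 | hq₁0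
      · have hz : bhAux r₁ δ₁ b₁ δ₃ q₁ q₂ = 0 := by
          rw [bhAux, ← hq₁0, Real.zero_rpow hδ₁.ne', mul_zero, zero_div]
        have hpos : 0 < bhAux r₁ δ₁ b₁ δ₃ p₁ p₂ :=
          div_pos (mul_pos hr₁ (Real.rpow_pos_of_pos (hq₁0 ▸ h1) δ₁))
            (bhAux_denom_pos δ₁ δ₃ hb₁ hp₁ hp₂)
        rw [hz] at hF; linarith
      rcases eq_or_lt_of_le hq₂ with hq₂0 | hq₂0
      · have hz : bhAux r₂ δ₂ b₂ δ₄ q₂ q₁ = 0 := by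
          rw [bhAux, ← hq₂0, Real.zero_rpow hδ₂.ne', mul_zero, zero_div]
        have hpos : 0 < bhAux r₂ δ₂ b₂ δ₄ p₂ p₁ :=
          div_pos (mul_pos hr₂ (Real.rpow_pos_of_pos (hq₂0 ▸ h2) δ₂))
            (bhAux_denom_pos δ₂ δ₄ hb₂ hp₂ hp₁)
        rw [hz] at hG; linarith
      -- now 0 < q₁ < p₁ ≤ r₁ and 0 < q₂ < p₂
      have hp₁0 : 0 < p₁ := hq₁0.trans h1
      have hp₂0 : 0 < p₂ := hq₂0.trans h2
      set P := p₁ ^ δ₁ with hPdef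
      set Q := q₁ ^ δ₁ with hQdef
      set Bp := b₁ * p₂ ^ δ₃ with hBpdef
      set Bq := b₁ * q₂ ^ δ₃ with hBqdef
      set P₂ := p₂ ^ δ₂ with hP₂def
      set Q₂ := q₂ ^ δ₂ with hQ₂def
      set Cp := b₂ * p₁ ^ δ₄ with hCpdef
      set Cq := b₂ * q₁ ^ δ₄ with hCqdef
      have hPpos : 0 < P := Real.rpow_pos_of_pos hp₁0 δ₁
      have hQpos : 0 < Q := Real.rpow_pos_of_pos hq₁0 δ₁
      have hBppos : 0 < Bp := mul_pos hb₁ (Real.rpow_pos_of_pos hp₂0 δ₃)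
      have hBqpos : 0 < Bq := mul_pos hb₁ (Real.rpow_pos_of_pos hq₂0 δ₃)
      have hP₂pos : 0 < P₂ := Real.rpow_pos_of_pos hp₂0 δ₂
      have hQ₂pos : 0 < Q₂ := Real.rpow_pos_of_pos hq₂0 δ₂
      have hCppos : 0 < Cp := mul_pos hb₂ (Real.rpow_pos_of_pos hp₁0 δ₄)
      have hCqpos : 0 < Cq := mul_pos hb₂ (Real.rpow_pos_of_pos hq₁0 δ₄)
      have hPQ : Q < P := Real.rpow_lt_rpow hq₁ h1 hδ₁
      have hP₂Q₂ : Q₂ < P₂ := Real.rpow_lt_rpow hq₂ h2 hδ₂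
      -- cross-multiplied inequalities
      have hF' : r₁ * P * (1 + Q + Bq) ≤ r₁ * Q * (1 + P + Bp) := by
        have d1 : 0 < 1 + P + Bp := by linarith
        have d2 : 0 < 1 + Q + Bq := by linarith
        rw [bhAux, bhAux] at hF
        exact (div_le_div_iff₀ d1 d2).1 hF
      have hG' : r₂ * P₂ * (1 + Q₂ + Cq) ≤ r₂ * Q₂ * (1 + P₂ + Cp) := by
        have d1 : 0 < 1 + P₂ + Cp := by linarith
        have d2 : 0 < 1 + Q₂ + Cq := by linarith
        rw [bhAux, bhAux] at hG
        exact (div_le_div_iff₀ d1 d2).1 hG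
      have key1 : P + P * Bq ≤ Q + Q * Bp := by
        have h := hF'
        rw [mul_assoc, mul_assoc] at h
        have h' := le_of_mul_le_mul_left h hr₁
        linarith [h']
      have key2 : P₂ + P₂ * Cq ≤ Q₂ + Q₂ * Cp := by
        have h := hG'
        rw [mul_assoc, mul_assoc] at h
        have h' := le_of_mul_le_mul_left h hr₂
        linarith [h']
      have st1 : P * Bq < Q * Bp := by linarith [key1, hPQ]
      -- ratio quantities
      set ρ := p₁ / q₁ with hρdef
      set σ := p₂ / q₂ with hσdef
      have hρ : 1 < ρ := (one_lt_div hq₁0).2 h1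
      have hσ : 1 < σ := (one_lt_div hq₂0).2 h2
      have hρ0 : 0 < ρ := by linarith
      have hσ0 : 0 < σ := by linarith
      have hmulρ : q₁ * ρ = p₁ := by rw [hρdef]; field_simp
      have hmulσ : q₂ * σ = p₂ := by rw [hσdef]; field_simp
      have hP : P = Q * ρ ^ δ₁ := by
        rw [hPdef, hQdef, ← hmulρ, Real.mul_rpow hq₁ hρ0.le]
      have hBp : Bp = Bq * σ ^ δ₃ := by
        rw [hBpdef, hBqdef, ← hmulσ, Real.mul_rpow hq₂ hσ0.le]; ring
      have hP₂ : P₂ = Q₂ * σ ^ δ₂ := by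
        rw [hP₂def, hQ₂def, ← hmulσ, Real.mul_rpow hq₂ hσ0.le]
      have hCp : Cp = Cq * ρ ^ δ₄ := by
        rw [hCpdef, hCqdef, ← hmulρ, Real.mul_rpow hq₁ hρ0.le]; ring
      set R := ρ ^ δ₄ with hRdef
      have hR1 : 1 < R := by
        rw [hRdef]
        exact (Real.one_lt_rpow_iff_of_pos hρ0).2 (Or.inl ⟨hρ, hδ₄⟩)
      have hRpos : 0 < R := lt_trans one_pos hR1
      have r1 : ρ ^ δ₁ < σ ^ δ₃ := by
        rw [hP, hBp] at st1
        have st1' : Q * Bq * ρ ^ δ₁ < Q * Bq * σ ^ δ₃ := by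
          calc Q * Bq * ρ ^ δ₁ = Q * ρ ^ δ₁ * Bq := by ring
            _ < Q * (Bq * σ ^ δ₃) := st1
            _ = Q * Bq * σ ^ δ₃ := by ring
        exact lt_of_mul_lt_mul_left st1' (mul_pos hQpos hBqpos).le
      have s2 : σ ^ δ₂ * (1 + Cq) ≤ 1 + Cq * R := by
        rw [hP₂, hCp] at key2
        have s2' : Q₂ * (σ ^ δ₂ * (1 + Cq)) ≤ Q₂ * (1 + Cq * (ρ ^ δ₄)) := by
          calc Q₂ * (σ ^ δ₂ * (1 + Cq)) = Q₂ * σ ^ δ₂ + Q₂ * σ ^ δ₂ * Cq := by ring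
            _ ≤ Q₂ + Q₂ * (Cq * ρ ^ δ₄) := key2
            _ = Q₂ * (1 + Cq * (ρ ^ δ₄)) := by ring
        exact le_of_mul_le_mul_left s2' hQ₂pos
      set k := δ₁ * δ₂ / (δ₃ * δ₄) with hkdef
      have h34 : 0 < δ₃ * δ₄ := mul_pos hδ₃ hδ₄
      have hk0 : 0 < k := div_pos (mul_pos hδ₁ hδ₂) h34
      have hk1 : k < 1 := (div_lt_one h34).2 hδ
      have hRk : R ^ k = ρ ^ (δ₁ * δ₂ / δ₃) := by
        rw [hRdef, ← Real.rpow_mul hρ0.le]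
        congr 1
        rw [hkdef]
        field_simp
      have hσδ : R ^ k < σ ^ δ₂ := by
        have e1 : (ρ ^ δ₁) ^ (δ₂ / δ₃) < (σ ^ δ₃) ^ (δ₂ / δ₃) :=
          Real.rpow_lt_rpow (Real.rpow_nonneg hρ0.le δ₁) r1 (div_pos hδ₂ hδ₃)
        rw [← Real.rpow_mul hρ0.le, ← Real.rpow_mul hσ0.le] at e1
        have e2 : δ₃ * (δ₂ / δ₃) = δ₂ := by
          rw [mul_comm, div_mul_cancel₀ _ hδ₃.ne']
        have e3 : δ₁ * (δ₂ / δ₃) = δ₁ * δ₂ / δ₃ := by ring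
        rw [e2, e3] at e1
        rw [hRk]
        exact e1
      have hRkpos : 0 < R ^ k := Real.rpow_pos_of_pos hRpos k
      have star : R ^ k * (1 + Cq) < 1 + Cq * R := by
        have h7 : R ^ k * (1 + Cq) < σ ^ δ₂ * (1 + Cq) :=
          mul_lt_mul_of_pos_right hσδ (by linarith)
        exact h7.trans_le s2
      have hCpr : Cp ≤ b₂ * r₁ ^ δ₄ := by
        rw [hCpdef]
        exact mul_le_mul_of_nonneg_left (Real.rpow_le_rpow hp₁0.le hp₁r hδ₄.le) hb₂.le
      have hCqR : Cq * R = Cp := hCp.symm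
      have hMk : Cq * R * (1 - k) < k := by
        have hk34 : k * (δ₃ * δ₄) = δ₁ * δ₂ := by
          rw [hkdef]; exact div_mul_cancel₀ _ h34.ne'
        have h5 : Cp * (δ₃ * δ₄ - δ₁ * δ₂) < δ₁ * δ₂ :=
          lt_of_le_of_lt (mul_le_mul_of_nonneg_right hCpr (by linarith)) ht
        refine (mul_lt_mul_iff_left₀ h34).1 ?_
        calc Cq * R * (1 - k) * (δ₃ * δ₄) = Cp * (δ₃ * δ₄ - δ₁ * δ₂) := by
              rw [hCqR]; linear_combination (-Cp) * hk34
          _ < δ₁ * δ₂ := h5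
          _ = k * (δ₃ * δ₄) := hk34.symm
      have hAM := bhAux_amgm hk0 hk1 hR1
      have hRk1 : R ^ k < R := by
        have h8 := Real.rpow_lt_rpow_of_exponent_lt hR1 hk1
        rwa [Real.rpow_one] at h8
      have hRkm : R ^ (k - 1) * R = R ^ k := by
        have h9 := Real.rpow_add hRpos (k - 1) 1
        rw [Real.rpow_one, sub_add_cancel] at h9
        exact h9.symm
      have hAMR : R ≤ (1 - k) * (R ^ k * R) + k * R ^ k := by
        have h6 : 1 * R ≤ ((1 - k) * R ^ k + k * R ^ (k - 1)) * R :=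
          mul_le_mul_of_nonneg_right hAM hRpos.le
        rw [one_mul] at h6
        calc R ≤ ((1 - k) * R ^ k + k * R ^ (k - 1)) * R := h6
          _ = (1 - k) * (R ^ k * R) + k * (R ^ (k - 1) * R) := by ring
          _ = (1 - k) * (R ^ k * R) + k * R ^ k := by rw [hRkm]
      have d1 : 0 < R - R ^ k := sub_pos.2 hRk1
      have h1k : 0 < 1 - k := by linarith
      have c1 : R ^ k - 1 < Cq * (R - R ^ k) := by linarith [star]
      have c2 : k * (R - R ^ k) ≤ (1 - k) * (R * (R ^ k - 1)) := by linarith [hAMR]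
      have c3 : Cq * R * (1 - k) * (R - R ^ k) < k * (R - R ^ k) :=
        mul_lt_mul_of_pos_right hMk d1
      have c4 : Cq * (R - R ^ k) * ((1 - k) * R) < (R ^ k - 1) * ((1 - k) * R) := by
        calc Cq * (R - R ^ k) * ((1 - k) * R) = Cq * R * (1 - k) * (R - R ^ k) := by ring
          _ < k * (R - R ^ k) := c3
          _ ≤ (1 - k) * (R * (R ^ k - 1)) := c2
          _ = (R ^ k - 1) * ((1 - k) * R) := by ring
      have c5 : Cq * (R - R ^ k) < R ^ k - 1 :=
        (mul_lt_mul_iff_left₀ (mul_pos h1k hRpos)).1 c4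
      linarith [c1, c5]
lemma bhAux_conv_tail (f : ℕ → ℝ) (c C : ℝ) (hbl : ∀ n, c ≤ f n) (hbu : ∀ n, f n ≤ C)
    (t₀ : ℕ)
    (h : (∀ s, t₀ ≤ s → f s ≤ f (s + 1)) ∨ (∀ s, t₀ ≤ s → f (s + 1) ≤ f s)) :
    ∃ L, Tendsto f atTop (𝓝 L) := by
  rcases h with h | h
  · have hg : Monotone (fun n => f (n + t₀)) := by
      apply monotone_nat_of_le_succ
      intro n
      have h2 := h (n + t₀) (Nat.le_add_left _ _)
      have h3 : n + 1 + t₀ = n + t₀ + 1 := by omega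
      simpa [h3] using h2
    have hbdd : BddAbove (Set.range fun n => f (n + t₀)) := by
      refine ⟨C, ?_⟩; rintro z ⟨n, rfl⟩; exact hbu _
    exact ⟨_, (tendsto_add_atTop_iff_nat t₀).1 (tendsto_atTop_ciSup hg hbdd)⟩
  · have hg : Antitone (fun n => f (n + t₀)) := by
      apply antitone_nat_of_succ_le
      intro n
      have h2 := h (n + t₀) (Nat.le_add_left _ _)
      have h3 : n + 1 + t₀ = n + t₀ + 1 := by omega
      simpa [h3] using h2
    have hbdd : BddBelow (Set.range fun n => f (n + t₀)) := by
      refine ⟨c, ?_⟩; rintro z ⟨n, rfl⟩; exact hbl _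
    exact ⟨_, (tendsto_add_atTop_iff_nat t₀).1 (tendsto_atTop_ciInf hg hbdd)⟩

lemma bhAux_limit_fix {r b δ δ' : ℝ} (hr : 0 < r) (hb : 0 < b) (hδ : 0 < δ) (hδ' : 0 < δ')
    {x y : ℕ → ℝ} {X Y : ℝ} (hX : Tendsto x atTop (𝓝 X)) (hY : Tendsto y atTop (𝓝 Y))
    (hXnn : 0 ≤ X) (hYnn : 0 ≤ Y)
    (hrec : ∀ t, x (t + 1) = bhAux r δ b δ' (x t) (y t)) :
    bhAux r δ b δ' X Y = X := by
  have cX : Tendsto (fun t => (x t) ^ δ) atTop (𝓝 (X ^ δ)) :=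
    ((Real.continuousAt_rpow_const X δ (Or.inr hδ.le)).tendsto).comp hX
  have cY : Tendsto (fun t => (y t) ^ δ') atTop (𝓝 (Y ^ δ')) :=
    ((Real.continuousAt_rpow_const Y δ' (Or.inr hδ'.le)).tendsto).comp hY
  have num : Tendsto (fun t => r * (x t) ^ δ) atTop (𝓝 (r * X ^ δ)) := cX.const_mul r
  have den : Tendsto (fun t => 1 + (x t) ^ δ + b * (y t) ^ δ') atTop
      (𝓝 (1 + X ^ δ + b * Y ^ δ')) := (tendsto_const_nhds.add cX).add (cY.const_mul b)
  have hdpos : 0 < 1 + X ^ δ + b * Y ^ δ' := bhAux_denom_pos δ δ' hb hXnn hYnn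
  have hdiv : Tendsto (fun t => bhAux r δ b δ' (x t) (y t)) atTop
      (𝓝 (bhAux r δ b δ' X Y)) := by
    exact num.div den hdpos.ne'
  have hshift : Tendsto (fun t => x (t + 1)) atTop (𝓝 X) :=
    (tendsto_add_atTop_iff_nat 1).2 hX
  have h2 : Tendsto (fun t => x (t + 1)) atTop (𝓝 (bhAux r δ b δ' X Y)) :=
    hdiv.congr fun t => (hrec t).symm
  exact tendsto_nhds_unique h2 hshift

lemma bhAux_core {r₁ r₂ b₁ b₂ δ₁ δ₂ δ₃ δ₄ : ℝ}
    (hr₁ : 0 < r₁) (hr₂ : 0 < r₂) (hb₁ : 0 < b₁) (hb₂ : 0 < b₂)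
    (hδ₁ : 0 < δ₁) (hδ₂ : 0 < δ₂) (hδ₃ : 0 < δ₃) (hδ₄ : 0 < δ₄)
    (hδ : δ₁ * δ₂ < δ₃ * δ₄)
    (ht : b₂ * r₁ ^ δ₄ * (δ₃ * δ₄ - δ₁ * δ₂) < δ₁ * δ₂)
    (x y : ℕ → ℝ) (hx0 : 0 ≤ x 0) (hy0 : 0 ≤ y 0)
    (hrx : ∀ t, x (t + 1) = bhAux r₁ δ₁ b₁ δ₃ (x t) (y t))
    (hry : ∀ t, y (t + 1) = bhAux r₂ δ₂ b₂ δ₄ (y t) (x t)) :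
    ∃ X Y, Tendsto x atTop (𝓝 X) ∧ Tendsto y atTop (𝓝 Y) ∧
      bhAux r₁ δ₁ b₁ δ₃ X Y = X ∧ bhAux r₂ δ₂ b₂ δ₄ Y X = Y := by
  have hxynn : ∀ t, 0 ≤ x t ∧ 0 ≤ y t := by
    intro t
    induction t with
    | zero => exact ⟨hx0, hy0⟩
    | succ n ih =>
      exact ⟨by rw [hrx n]; exact bhAux_nonneg _ _ hr₁ hb₁ ih.1 ih.2,
             by rw [hry n]; exact bhAux_nonneg _ _ hr₂ hb₂ ih.2 ih.1⟩
  have hxnn : ∀ t, 0 ≤ x t := fun t => (hxynn t).1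
  have hynn : ∀ t, 0 ≤ y t := fun t => (hxynn t).2
  have hxr : ∀ t, x (t + 1) ≤ r₁ := fun t => by
    rw [hrx t]; exact bhAux_le _ _ hr₁ hb₁ (hxnn t) (hynn t)
  have hxC : ∀ t, x t ≤ max (x 0) r₁ := by
    intro t; cases t with
    | zero => exact le_max_left _ _
    | succ n => exact (hxr n).trans (le_max_right _ _)
  have hyr : ∀ t, y (t + 1) ≤ r₂ := fun t => by
    rw [hry t]; exact bhAux_le _ _ hr₂ hb₂ (hynn t) (hxnn t)
  have hyC : ∀ t, y t ≤ max (y 0) r₂ := by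
    intro t; cases t with
    | zero => exact le_max_left _ _
    | succ n => exact (hyr n).trans (le_max_right _ _)
  obtain ⟨t₀, hxm, hym⟩ :
      ∃ t₀, ((∀ s, t₀ ≤ s → x s ≤ x (s + 1)) ∨ (∀ s, t₀ ≤ s → x (s + 1) ≤ x s)) ∧
        ((∀ s, t₀ ≤ s → y s ≤ y (s + 1)) ∨ (∀ s, t₀ ≤ s → y (s + 1) ≤ y s)) := by
    by_cases hA : ∃ t, (x t ≤ x (t + 1) ∧ y (t + 1) ≤ y t) ∨
        (x (t + 1) ≤ x t ∧ y t ≤ y (t + 1))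
    · obtain ⟨t₁, ht₁⟩ := hA
      rcases ht₁ with hse | hnw
      · have key : ∀ s, t₁ ≤ s → (x s ≤ x (s + 1) ∧ y (s + 1) ≤ y s) := by
          intro s hs
          induction s, hs using Nat.le_induction with
          | base => exact hse
          | succ n hn ih =>
            constructor
            · rw [hrx n, hrx (n + 1)]
              exact bhAux_mono hr₁ hb₁ hδ₁ hδ₃ (hxnn n) ih.1 (hynn (n + 1)) ih.2
            · rw [hry n, hry (n + 1)]
              exact bhAux_mono hr₂ hb₂ hδ₂ hδ₄ (hynn (n + 1)) ih.2 (hxnn n) ih.1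
        exact ⟨t₁, Or.inl fun s hs => (key s hs).1, Or.inr fun s hs => (key s hs).2⟩
      · have key : ∀ s, t₁ ≤ s → (x (s + 1) ≤ x s ∧ y s ≤ y (s + 1)) := by
          intro s hs
          induction s, hs using Nat.le_induction with
          | base => exact hnw
          | succ n hn ih =>
            constructor
            · rw [hrx n, hrx (n + 1)]
              exact bhAux_mono hr₁ hb₁ hδ₁ hδ₃ (hxnn (n + 1)) ih.1 (hynn n) ih.2
            · rw [hry n, hry (n + 1)]
              exact bhAux_mono hr₂ hb₂ hδ₂ hδ₄ (hynn n) ih.2 (hxnn (n + 1)) ih.1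
        exact ⟨t₁, Or.inr fun s hs => (key s hs).1, Or.inl fun s hs => (key s hs).2⟩
    · have hUD : ∀ t, (x t < x (t + 1) ∧ y t < y (t + 1)) ∨
          (x (t + 1) < x t ∧ y (t + 1) < y t) := by
        intro t
        have hnot : ¬((x t ≤ x (t + 1) ∧ y (t + 1) ≤ y t) ∨
            (x (t + 1) ≤ x t ∧ y t ≤ y (t + 1))) := fun hc => hA ⟨t, hc⟩
        rcases le_or_gt (x (t + 1)) (x t) with hx | hx
        · rcases le_or_gt (y (t + 1)) (y t) with hy | hy
          · have hy' : y (t + 1) < y t :=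
              lt_of_le_of_ne hy fun he => hnot (Or.inr ⟨hx, le_of_eq he.symm⟩)
            have hx' : x (t + 1) < x t :=
              lt_of_le_of_ne hx fun he => hnot (Or.inl ⟨le_of_eq he.symm, hy⟩)
            exact Or.inr ⟨hx', hy'⟩
          · exact absurd (Or.inr ⟨hx, hy.le⟩) hnot
        · rcases le_or_gt (y t) (y (t + 1)) with hy | hy
          · have hy' : y t < y (t + 1) :=
              lt_of_le_of_ne hy fun he => hnot (Or.inl ⟨hx.le, le_of_eq he.symm⟩)
            exact Or.inl ⟨hx, hy'⟩
          · exact absurd (Or.inl ⟨hx.le, hy.le⟩) hnot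
      by_cases hD : ∃ t, x (t + 1 + 1) < x (t + 1)
      · obtain ⟨t₂, ht₂⟩ := hD
        have hDall : ∀ s, t₂ + 1 ≤ s → (x (s + 1) < x s ∧ y (s + 1) < y s) := by
          intro s hs
          induction s, hs using Nat.le_induction with
          | base =>
            rcases hUD (t₂ + 1) with h | h
            · exact absurd ht₂ (not_lt.2 h.1.le)
            · exact h
          | succ n hn ih =>
            rcases hUD (n + 1) with h | h
            · exfalso
              have hxnr : x n ≤ r₁ := by
                obtain ⟨m, rfl⟩ : ∃ m, n = m + 1 := ⟨n - 1, by omega⟩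
                exact hxr m
              have hF : bhAux r₁ δ₁ b₁ δ₃ (x n) (y n) ≤
                  bhAux r₁ δ₁ b₁ δ₃ (x (n + 1)) (y (n + 1)) := by
                rw [← hrx n, ← hrx (n + 1)]; exact h.1.le
              have hG : bhAux r₂ δ₂ b₂ δ₄ (y n) (x n) ≤
                  bhAux r₂ δ₂ b₂ δ₄ (y (n + 1)) (x (n + 1)) := by
                rw [← hry n, ← hry (n + 1)]; exact h.2.le
              have hres := bhAux_univalence hr₁ hr₂ hb₁ hb₂ hδ₁ hδ₂ hδ₃ hδ₄ hδ ht
                (hxnn n) (hynn n) (hxnn (n + 1)) (hynn (n + 1)) hxnr hF hG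
              exact absurd hres.1 (not_le.2 ih.1)
            · exact h
        exact ⟨t₂ + 1, Or.inr fun s hs => (hDall s hs).1.le,
          Or.inr fun s hs => (hDall s hs).2.le⟩
      · push_neg at hD
        have hUall : ∀ s, 1 ≤ s → (x s ≤ x (s + 1) ∧ y s ≤ y (s + 1)) := by
          intro s hs
          obtain ⟨m, rfl⟩ : ∃ m, s = m + 1 := ⟨s - 1, by omega⟩
          rcases hUD (m + 1) with h | h
          · exact ⟨h.1.le, h.2.le⟩
          · exact absurd h.1 (not_lt.2 (hD m))
        exact ⟨1, Or.inl fun s hs => (hUall s hs).1, Or.inl fun s hs => (hUall s hs).2⟩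
  obtain ⟨X, hX⟩ := bhAux_conv_tail x 0 (max (x 0) r₁) hxnn hxC t₀ hxm
  obtain ⟨Y, hY⟩ := bhAux_conv_tail y 0 (max (y 0) r₂) hynn hyC t₀ hym
  have hXnn : 0 ≤ X := ge_of_tendsto' hX hxnn
  have hYnn : 0 ≤ Y := ge_of_tendsto' hY hynn
  exact ⟨X, Y, hX, hY,
    bhAux_limit_fix hr₁ hb₁ hδ₁ hδ₃ hX hY hXnn hYnn hrx,
    bhAux_limit_fix hr₂ hb₂ hδ₂ hδ₄ hY hX hYnn hXnn hry⟩
/-- If `δ₁δ₂ < δ₃δ₄` and one of the growth rates is small enough, every orbit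
of the competition map `T` starting in `[0,∞)²` converges to a fixed point. -/
theorem stmt_12 (r₁ r₂ b₁ b₂ δ₁ δ₂ δ₃ δ₄ : ℝ)
    (hr₁ : 0 < r₁) (hr₂ : 0 < r₂) (hb₁ : 0 < b₁) (hb₂ : 0 < b₂)
    (hδ₁ : 0 < δ₁) (hδ₂ : 0 < δ₂) (hδ₃ : 0 < δ₃) (hδ₄ : 0 < δ₄)
    (hδ : δ₁ * δ₂ < δ₃ * δ₄)
    (hsmall :
      r₁ < (δ₁ * δ₂ / (b₂ * (δ₃ * δ₄ - δ₁ * δ₂))) ^ (1 / δ₄) ∨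
      r₂ < (δ₁ * δ₂ / (b₁ * (δ₃ * δ₄ - δ₁ * δ₂))) ^ (1 / δ₃))
    (T : ℝ × ℝ → ℝ × ℝ)
    (hT : ∀ x y : ℝ, T (x, y) =
      (r₁ * x ^ δ₁ / (1 + x ^ δ₁ + b₁ * y ^ δ₃),
       r₂ * y ^ δ₂ / (1 + y ^ δ₂ + b₂ * x ^ δ₄))) :
    ∀ x y : ℕ → ℝ, 0 ≤ x 0 → 0 ≤ y 0 →
      (∀ t : ℕ, (x (t + 1), y (t + 1)) = T (x t, y t)) →
      ∃ p : ℝ × ℝ, T p = p ∧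
        Filter.Tendsto (fun t : ℕ => (x t, y t)) Filter.atTop (nhds p) := by
  intro x y hx0 hy0 hstep
  have hrx : ∀ t, x (t + 1) = bhAux r₁ δ₁ b₁ δ₃ (x t) (y t) := by
    intro t
    have h := hstep t
    rw [hT] at h
    exact congrArg Prod.fst h
  have hry : ∀ t, y (t + 1) = bhAux r₂ δ₂ b₂ δ₄ (y t) (x t) := by
    intro t
    have h := hstep t
    rw [hT] at h
    exact congrArg Prod.snd h
  have hsub : 0 < δ₃ * δ₄ - δ₁ * δ₂ := sub_pos.2 hδ
  have main : ∃ X Y, Tendsto x atTop (𝓝 X) ∧ Tendsto y atTop (𝓝 Y) ∧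
      bhAux r₁ δ₁ b₁ δ₃ X Y = X ∧ bhAux r₂ δ₂ b₂ δ₄ Y X = Y := by
    rcases hsmall with hs | hs
    · -- convert to polynomial form
      have hApos : 0 < δ₁ * δ₂ / (b₂ * (δ₃ * δ₄ - δ₁ * δ₂)) :=
        div_pos (mul_pos hδ₁ hδ₂) (mul_pos hb₂ hsub)
      have h1 : r₁ ^ δ₄ < δ₁ * δ₂ / (b₂ * (δ₃ * δ₄ - δ₁ * δ₂)) := by
        have h2 := Real.rpow_lt_rpow hr₁.le hs hδ₄
        rwa [← Real.rpow_mul hApos.le, one_div, inv_mul_cancel₀ hδ₄.ne',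
          Real.rpow_one] at h2
      have ht : b₂ * r₁ ^ δ₄ * (δ₃ * δ₄ - δ₁ * δ₂) < δ₁ * δ₂ := by
        have h3 := (lt_div_iff₀ (mul_pos hb₂ hsub)).1 h1
        linarith [h3]
      exact bhAux_core hr₁ hr₂ hb₁ hb₂ hδ₁ hδ₂ hδ₃ hδ₄ hδ ht x y hx0 hy0 hrx hry
    · -- symmetric case
      have hδ' : δ₂ * δ₁ < δ₄ * δ₃ := by linarith [hδ, mul_comm δ₁ δ₂, mul_comm δ₃ δ₄]
      have hsub' : 0 < δ₄ * δ₃ - δ₂ * δ₁ := by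
        have e1 : δ₄ * δ₃ = δ₃ * δ₄ := mul_comm _ _
        have e2 : δ₂ * δ₁ = δ₁ * δ₂ := mul_comm _ _
        rw [e1, e2]; exact hsub
      have hApos : 0 < δ₁ * δ₂ / (b₁ * (δ₃ * δ₄ - δ₁ * δ₂)) :=
        div_pos (mul_pos hδ₁ hδ₂) (mul_pos hb₁ hsub)
      have h1 : r₂ ^ δ₃ < δ₁ * δ₂ / (b₁ * (δ₃ * δ₄ - δ₁ * δ₂)) := by
        have h2 := Real.rpow_lt_rpow hr₂.le hs hδ₃
        rwa [← Real.rpow_mul hApos.le, one_div, inv_mul_cancel₀ hδ₃.ne',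
          Real.rpow_one] at h2
      have ht : b₁ * r₂ ^ δ₃ * (δ₄ * δ₃ - δ₂ * δ₁) < δ₂ * δ₁ := by
        have h3 := (lt_div_iff₀ (mul_pos hb₁ hsub)).1 h1
        nlinarith [h3]
      obtain ⟨Y, X, hY, hX, hfY, hfX⟩ :=
        bhAux_core hr₂ hr₁ hb₂ hb₁ hδ₂ hδ₁ hδ₄ hδ₃ hδ' ht y x hy0 hx0 hry hrx
      exact ⟨X, Y, hX, hY, hfX, hfY⟩
  obtain ⟨X, Y, hX, hY, hfX, hfY⟩ := main
  refine ⟨(X, Y), ?_, ?_⟩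
  · rw [hT X Y]
    rw [Prod.mk.injEq]
    exact ⟨hfX, hfY⟩
  · exact hX.prodMk_nhds hY
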